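/- In the Mechanism-F setting, let D be a finset of U with |D| ≥ k, d' ∉ D, D' = insert d' D, y ∈ U, and j = I d' y. Let t be an integer with 1 ≤ t ≤ k, let γ > 1 be real, set ε = ε0 + ln(1 + γ/t), and assume additionally that T (k − t) ≤ exp(−ε0·(k − t)). If |C j D y| < t, then PrF D' y ≤ exp(ε)·PrF D y + (1/|D'|)·exp(−ε0·(k − t))·Σ_{s ∈ C j D' y} p s y. -/

import Mathlib

open Finset

noncomputable section MechanismF

variable {U : Type} [Fintype U] [DecidableEq U]

/-- Seeds of `D` in partition `j` for candidate `y`: `C j D y = {s ∈ D : I s y = j}`. -/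
def Cpart (I : U → U → ℕ) (j : ℕ) (D : Finset U) (y : U) : Finset U :=
  D.filter (fun s => I s y = j)

/-- Pass probability of the privacy test: `pt D j y = T (k − |C j D y|)`. -/
def pt (T : ℤ → ℝ) (k : ℤ) (I : U → U → ℕ) (D : Finset U) (j : ℕ) (y : U) : ℝ :=
  T (k - ((Cpart I j D y).card : ℤ))

/-- Weight of partition `j`: `q D j y = pt D j y · Σ_{s ∈ C j D y} p s y`. -/
def q (p : U → U → ℝ) (T : ℤ → ℝ) (k : ℤ) (I : U → U → ℕ)
    (D : Finset U) (j : ℕ) (y : U) : ℝ :=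
  pt T k I D j y * ∑ s ∈ Cpart I j D y, p s y

/-- Output probability of the mechanism `F`:
`PrF D y = (1/|D|) · Σ_{j ∈ ℕ} q D j y` (only finitely many terms are nonzero). -/
def PrF (p : U → U → ℝ) (T : ℤ → ℝ) (k : ℤ) (I : U → U → ℕ)
    (D : Finset U) (y : U) : ℝ :=
  ((D.card : ℝ))⁻¹ * ∑' j : ℕ, q p T k I D j y

end MechanismF

lemma q_nonneg {U : Type} [Fintype U] [DecidableEq U]
    (p : U → U → ℝ) (T : ℤ → ℝ) (k : ℤ) (I : U → U → ℕ)
    (hp0 : ∀ s y, 0 ≤ p s y) (hT0 : ∀ a, 0 ≤ T a)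
    (D : Finset U) (j : ℕ) (y : U) : 0 ≤ q p T k I D j y :=
  mul_nonneg (hT0 _) (Finset.sum_nonneg fun s _ => hp0 s y)

lemma q_summable {U : Type} [Fintype U] [DecidableEq U]
    (p : U → U → ℝ) (T : ℤ → ℝ) (k : ℤ) (I : U → U → ℕ)
    (D : Finset U) (y : U) : Summable (fun j => q p T k I D j y) := by
  apply summable_of_ne_finset_zero (s := D.image (fun s => I s y))
  intro j hj
  have hemp : Cpart I j D y = ∅ :=
    Finset.filter_eq_empty_iff.mpr (fun {s} hs h => hj (Finset.mem_image.mpr ⟨s, hs, h⟩))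
  simp [q, hemp]

/-- Lemma (second direction, Case 1): with `|D| ≥ k`, `D' = insert d' D`, `j = I d' y`,
`1 ≤ t ≤ k`, `γ > 1`, `ε = ε0 + ln(1 + γ/t)`, `T(k − t) ≤ exp(−ε0(k − t))`, and
`|C j D y| < t`, we have
`PrF D' y ≤ exp ε · PrF D y + (1/|D'|)·exp(−ε0(k − t))·Σ_{s ∈ C j D' y} p s y`. -/
theorem PrF_insert_le_case_small
    {U : Type} [Fintype U] [DecidableEq U]
    (p : U → U → ℝ) (I : U → U → ℕ) (T : ℤ → ℝ) (k : ℤ) (ε0 : ℝ)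
    (hp0 : ∀ s y, 0 ≤ p s y) (hp1 : ∀ s, ∑ y, p s y ≤ 1)
    (hk : 1 ≤ k) (hε0 : 0 ≤ ε0)
    (hT0 : ∀ a, 0 ≤ T a) (hT1 : ∀ a, T a ≤ 1)
    (hTanti : ∀ a b : ℤ, a ≤ b → T b ≤ T a)
    (hTstep : ∀ a : ℤ, T a ≤ Real.exp ε0 * T (a + 1))
    (D : Finset U) (hD : k ≤ (D.card : ℤ)) (d' : U) (hd' : d' ∉ D) (y : U)
    (t : ℤ) (ht1 : 1 ≤ t) (htk : t ≤ k) (γ : ℝ) (hγ : 1 < γ)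
    (ε : ℝ) (hε : ε = ε0 + Real.log (1 + γ / (t : ℝ)))
    (hTtail : T (k - t) ≤ Real.exp (-ε0 * ((k - t : ℤ) : ℝ)))
    (hsmall : ((Cpart I (I d' y) D y).card : ℤ) < t) :
    PrF p T k I (insert d' D) y ≤
      Real.exp ε * PrF p T k I D y +
        (((insert d' D).card : ℝ))⁻¹ * Real.exp (-ε0 * ((k - t : ℤ) : ℝ)) *
          ∑ s ∈ Cpart I (I d' y) (insert d' D) y, p s y := by
  classical
  set j0 := I d' y with hj0
  set D' := insert d' D with hD'
  set B : ℝ := Real.exp (-ε0 * ((k - t : ℤ) : ℝ)) * ∑ s ∈ Cpart I j0 D' y, p s y with hB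
  -- basic cardinalities
  have hcardD1 : (1:ℤ) ≤ (D.card : ℤ) := le_trans hk hD
  have hDpos : 0 < (D.card : ℝ) := by
    have : (1:ℤ) ≤ (D.card:ℤ) := hcardD1
    exact_mod_cast lt_of_lt_of_le zero_lt_one (by exact_mod_cast this)
  have hcardD' : D'.card = D.card + 1 := Finset.card_insert_of_notMem hd'
  have hD'pos : 0 < (D'.card : ℝ) := by
    rw [hcardD']; positivity
  -- C' = insert d' C
  have hd'C : d' ∉ Cpart I j0 D y := fun h => hd' (Finset.mem_filter.mp h).1
  have hC' : Cpart I j0 D' y = insert d' (Cpart I j0 D y) := by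
    simp [Cpart, hD', Finset.filter_insert]
    intro h; exact absurd hj0.symm h
  have hCeq : ∀ j, j ≠ j0 → Cpart I j D' y = Cpart I j D y := by
    intro j hj
    rw [hD']
    unfold Cpart
    rw [Finset.filter_insert, if_neg (fun h => hj (by rw [hj0, h]))]
  -- nonnegativity
  have hqnn : ∀ (E : Finset U) j, 0 ≤ q p T k I E j y :=
    fun E j => q_nonneg p T k I hp0 hT0 E j y
  have hBnn : 0 ≤ B :=
    mul_nonneg (Real.exp_nonneg _) (Finset.sum_nonneg fun s _ => hp0 s y)
  -- exp ε ≥ 1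
  have hεnn : 0 ≤ ε := by
    rw [hε]
    have htpos : (0:ℝ) < (t:ℝ) := by exact_mod_cast lt_of_lt_of_le zero_lt_one ht1
    have : (0:ℝ) ≤ γ / (t:ℝ) := le_of_lt (div_pos (lt_trans zero_lt_one hγ) htpos)
    have hlog : 0 ≤ Real.log (1 + γ / (t:ℝ)) := Real.log_nonneg (by linarith)
    linarith
  have hexp1 : (1:ℝ) ≤ Real.exp ε := Real.one_le_exp hεnn
  -- bound on q at j0 for D'
  have hqj0 : q p T k I D' j0 y ≤ B := by
    have hcard : ((Cpart I j0 D' y).card : ℤ) ≤ t := by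
      rw [hC', Finset.card_insert_of_notMem hd'C]
      push_cast
      omega
    have h1 : pt T k I D' j0 y ≤ T (k - t) := hTanti _ _ (by omega)
    have h2 : pt T k I D' j0 y ≤ Real.exp (-ε0 * ((k - t : ℤ) : ℝ)) := le_trans h1 hTtail
    exact mul_le_mul_of_nonneg_right h2 (Finset.sum_nonneg fun s _ => hp0 s y)
  -- summability facts
  have hsumD := q_summable p T k I D y
  have hsumD' := q_summable p T k I D' y
  have hsingle : Summable (fun j : ℕ => if j = j0 then B else 0) := by
    apply summable_of_ne_finset_zero (s := {j0})
    intro j hj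
    simp [Finset.mem_singleton.not.mp hj]
  -- key tsum inequality
  have hptwise : ∀ j : ℕ, q p T k I D' j y ≤ q p T k I D j y + (if j = j0 then B else 0) := by
    intro j
    by_cases hj : j = j0
    · subst hj
      rw [if_pos rfl]
      have := hqnn D j0
      linarith [hqj0]
    · rw [if_neg hj]
      have : q p T k I D' j y = q p T k I D j y := by
        unfold q pt
        rw [hCeq j hj]
      linarith [this.le]
  have key : (∑' j : ℕ, q p T k I D' j y) ≤ (∑' j : ℕ, q p T k I D j y) + B := by
    calc (∑' j : ℕ, q p T k I D' j y)
        ≤ ∑' j : ℕ, (q p T k I D j y + (if j = j0 then B else 0)) :=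
          Summable.tsum_le_tsum hptwise hsumD' (hsumD.add hsingle)
      _ = (∑' j : ℕ, q p T k I D j y) + ∑' j : ℕ, (if j = j0 then B else 0) :=
          Summable.tsum_add hsumD hsingle
      _ = (∑' j : ℕ, q p T k I D j y) + B := by simp
  -- finishing
  have htsumDnn : 0 ≤ ∑' j : ℕ, q p T k I D j y := tsum_nonneg (fun j => hqnn D j)
  have hinv : ((D'.card:ℝ))⁻¹ ≤ ((D.card:ℝ))⁻¹ := by
    apply inv_anti₀ hDpos
    rw [hcardD']; push_cast; linarith
  have hstep1 : PrF p T k I D' y ≤ ((D'.card:ℝ))⁻¹ * ((∑' j : ℕ, q p T k I D j y) + B) := by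
    unfold PrF
    exact mul_le_mul_of_nonneg_left key (le_of_lt (inv_pos.mpr hD'pos))
  have hstep2 : ((D'.card:ℝ))⁻¹ * (∑' j : ℕ, q p T k I D j y) ≤
      Real.exp ε * PrF p T k I D y := by
    unfold PrF
    rw [← mul_assoc]
    apply mul_le_mul_of_nonneg_right _ htsumDnn
    calc ((D'.card:ℝ))⁻¹ ≤ ((D.card:ℝ))⁻¹ := hinv
      _ ≤ Real.exp ε * ((D.card:ℝ))⁻¹ :=
          le_mul_of_one_le_left (le_of_lt (inv_pos.mpr hDpos)) hexp1
  calc PrF p T k I D' y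
      ≤ ((D'.card:ℝ))⁻¹ * ((∑' j : ℕ, q p T k I D j y) + B) := hstep1
    _ = ((D'.card:ℝ))⁻¹ * (∑' j : ℕ, q p T k I D j y) + ((D'.card:ℝ))⁻¹ * B := by ring
    _ ≤ Real.exp ε * PrF p T k I D y + ((D'.card:ℝ))⁻¹ * B :=
        add_le_add_left hstep2 _
    _ = Real.exp ε * PrF p T k I D y +
        ((D'.card:ℝ))⁻¹ * Real.exp (-ε0 * ((k - t : ℤ) : ℝ)) *
          ∑ s ∈ Cpart I j0 D' y, p s y := by rw [hB]; ring
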